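/- The lexicographic product of two self-complementary graphs is self-complementary. -/

import Mathlib

/-- The lexicographic product of two graphs: `(a, b)` is adjacent to `(c, d)` iff
`a` is adjacent to `c` in `Γ₁`, or `a = c` and `b` is adjacent to `d` in `Γ₂`. -/
def SimpleGraph.lexProd {V₁ V₂ : Type*} (Γ₁ : SimpleGraph V₁) (Γ₂ : SimpleGraph V₂) :
    SimpleGraph (V₁ × V₂) where
  Adj x y := Γ₁.Adj x.1 y.1 ∨ (x.1 = y.1 ∧ Γ₂.Adj x.2 y.2)
  symm := by
    constructor
    rintro x y (h | ⟨h, h'⟩)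
    · exact Or.inl h.symm
    · exact Or.inr ⟨h.symm, h'.symm⟩
  loopless := by
    constructor
    rintro x (h | ⟨-, h⟩)
    · exact Γ₁.irrefl h
    · exact Γ₂.irrefl h

lemma compl_lexProd {V₁ V₂ : Type*} (Γ₁ : SimpleGraph V₁) (Γ₂ : SimpleGraph V₂) :
    (Γ₁.lexProd Γ₂)ᶜ = Γ₁ᶜ.lexProd Γ₂ᶜ := by
  ext ⟨a, b⟩ ⟨c, d⟩
  simp only [SimpleGraph.compl_adj, SimpleGraph.lexProd, Prod.mk.injEq, not_or, not_and]
  constructor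
  · rintro ⟨hne, h1, h2⟩
    by_cases hac : a = c
    · exact Or.inr ⟨hac, ⟨fun hbd => hne (Prod.ext hac hbd), h2 hac⟩⟩
    · exact Or.inl ⟨hac, h1⟩
  · rintro (⟨hac, h1⟩ | ⟨hac, hbd, h2⟩)
    · exact ⟨fun h => hac (congrArg Prod.fst h), h1, fun h => absurd h hac⟩
    · subst hac
      exact ⟨fun h => hbd (congrArg Prod.snd h), fun h => Γ₁.irrefl h, fun _ => h2⟩

theorem stmt_15 {V₁ V₂ : Type*} (Γ₁ : SimpleGraph V₁) (Γ₂ : SimpleGraph V₂)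
    (h₁ : Nonempty (Γ₁ ≃g Γ₁ᶜ)) (h₂ : Nonempty (Γ₂ ≃g Γ₂ᶜ)) :
    Nonempty (Γ₁.lexProd Γ₂ ≃g (Γ₁.lexProd Γ₂)ᶜ) := by
  obtain ⟨f⟩ := h₁
  obtain ⟨g⟩ := h₂
  rw [compl_lexProd]
  exact ⟨{ toEquiv := Equiv.prodCongr f.toEquiv g.toEquiv
           map_rel_iff' := by
             rintro ⟨a, b⟩ ⟨c, d⟩
             simp only [SimpleGraph.lexProd, Equiv.prodCongr_apply, Prod.map]
             exact or_congr f.map_adj_iff (and_congr f.toEquiv.apply_eq_iff_eq g.map_adj_iff) }⟩
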